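/- Fix an integer n ≥ 3 and a real number l > 0. Let w : [0, l] → ℝ be a twice differentiable function satisfying −w''(s) − (n/(2(n−1))) w'(s)² + n(n−1)/2 ≥ 0 for every s ∈ [0, l]. Then min{ −w'(0), w'(l) } ≤ n − 1. -/

import Mathlib

open Real Set

/-- Fix an integer `n ≥ 3` and a real number `l > 0`. Let `w : [0, l] → ℝ` be a twice
differentiable function (with one-sided derivatives at the endpoints) satisfying
`-w''(s) - (n/(2(n-1))) w'(s)² + n(n-1)/2 ≥ 0` for every `s ∈ [0, l]`. Then
`min{-w'(0), w'(l)} ≤ n - 1`. -/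
theorem stmt_12 (n : ℕ) (hn : 3 ≤ n) (l : ℝ) (hl : 0 < l)
    (w w' w'' : ℝ → ℝ)
    (hderiv : ∀ s ∈ Set.Icc 0 l, HasDerivWithinAt w (w' s) (Set.Icc 0 l) s)
    (hderiv' : ∀ s ∈ Set.Icc 0 l, HasDerivWithinAt w' (w'' s) (Set.Icc 0 l) s)
    (hineq : ∀ s ∈ Set.Icc 0 l,
      0 ≤ -w'' s - ((n : ℝ) / (2 * ((n : ℝ) - 1))) * (w' s) ^ 2 + (n : ℝ) * ((n : ℝ) - 1) / 2) :
    min (-(w' 0)) (w' l) ≤ (n : ℝ) - 1 := by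
  by_contra h
  push_neg at h
  rw [lt_min_iff] at h
  obtain ⟨h0, hL⟩ := h
  set a : ℝ := (n : ℝ) - 1 with ha
  have hn3 : (3 : ℝ) ≤ (n : ℝ) := by exact_mod_cast hn
  have ha2 : 2 ≤ a := by simp [ha]; linarith
  have hapos : 0 < a := by linarith
  have hw0 : w' 0 < -a := by linarith
  -- continuity of w'
  have hcont : ContinuousOn w' (Set.Icc 0 l) := fun s hs =>
    (hderiv' s hs).continuousWithinAt
  -- the set where w' ≥ -a
  set S : Set ℝ := Set.Icc 0 l ∩ w' ⁻¹' Set.Ici (-a) with hS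
  have hlS : l ∈ S := by
    constructor
    · exact ⟨le_of_lt hl, le_refl l⟩
    · simp only [Set.mem_preimage, Set.mem_Ici]; linarith
  have hSne : S.Nonempty := ⟨l, hlS⟩
  have hSbdd : BddBelow S := ⟨0, fun x hx => hx.1.1⟩
  have hSclosed : IsClosed S := by
    apply ContinuousOn.preimage_isClosed_of_isClosed hcont isClosed_Icc isClosed_Ici
  set t : ℝ := sInf S with ht
  have htS : t ∈ S := hSclosed.csInf_mem hSne hSbdd
  have htmem : t ∈ Set.Icc 0 l := htS.1
  have htw : -a ≤ w' t := htS.2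
  have ht0 : 0 < t := by
    rcases lt_or_eq_of_le htmem.1 with h | h
    · exact h
    · exfalso; rw [← h] at htw; linarith
  -- for s < t, w' s < -a
  have hbelow : ∀ s, s ∈ Set.Ico 0 t → w' s < -a := by
    intro s hs
    by_contra hcon
    push_neg at hcon
    have hsS : s ∈ S := ⟨⟨hs.1, le_trans hs.2.le htmem.2⟩, hcon⟩
    exact absurd (csInf_le hSbdd hsS) (not_le.mpr hs.2)
  -- key: c * a^2 = K
  have hden : (0 : ℝ) < 2 * a := by linarith
  have hc : (0 : ℝ) < (n : ℝ) / (2 * a) := by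
    apply div_pos <;> linarith
  -- w' is antitone on Icc 0 t
  have hanti : AntitoneOn w' (Set.Icc 0 t) := by
    apply antitoneOn_of_deriv_nonpos (convex_Icc 0 t)
    · exact hcont.mono (Set.Icc_subset_Icc le_rfl htmem.2)
    · intro s hs
      rw [interior_Icc] at hs
      have hsl : s ∈ Set.Icc 0 l := ⟨hs.1.le, le_trans hs.2.le htmem.2⟩
      have hmem : Set.Icc 0 l ∈ nhds s := by
        apply Icc_mem_nhds hs.1 (lt_of_lt_of_le hs.2 htmem.2)
      exact ((hderiv' s hsl).hasDerivAt hmem).differentiableAt.differentiableWithinAt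
    · intro s hs
      rw [interior_Icc] at hs
      have hsl : s ∈ Set.Icc 0 l := ⟨hs.1.le, le_trans hs.2.le htmem.2⟩
      have hmem : Set.Icc 0 l ∈ nhds s := by
        apply Icc_mem_nhds hs.1 (lt_of_lt_of_le hs.2 htmem.2)
      have hd : deriv w' s = w'' s := ((hderiv' s hsl).hasDerivAt hmem).deriv
      rw [hd]
      have hws : w' s < -a := hbelow s ⟨hs.1.le, hs.2⟩
      have hsq : a ^ 2 ≤ (w' s) ^ 2 := by nlinarith
      have hK : (n : ℝ) * a / 2 = ((n : ℝ) / (2 * a)) * a ^ 2 := by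
        field_simp
      have := hineq s hsl
      rw [show (n:ℝ) * ((n:ℝ)-1) / 2 = (n:ℝ) * a / 2 from by rw [ha], hK] at this
      nlinarith [mul_nonneg hc.le (sub_nonneg.mpr hsq)]
  have := hanti (Set.left_mem_Icc.mpr ht0.le) (Set.right_mem_Icc.mpr ht0.le) ht0.le
  linarith
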